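/- Soundness and completeness of the MIC-extraction encoding: Let (V,E,σ) be an influence graph with a designated set of input vertices and μ : V → {+,−} a partial vertex labeling. Then a subset W ⊆ V is a Minimal Inconsistent Core if and only if there is an answer set X of the disjunctive logic program P_D ∪ τ((V,E,σ),μ) such that { i ∈ V | active(i) ∈ X } = W. -/

import Mathlib

/-- Sign multiplication: `true` stands for `+` and `false` for `−`
(`+·+ = −·− = +`, `+·− = −·+ = −`). -/
def signMul (a b : Bool) : Bool := a == b

/-- `σ'` and `μ'` are witnessing labelings for `W` in the influence graph with
vertex type `V`, edges `E`, partial edge labeling `σ`, partial vertex labeling `μ`,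
and input vertices `I`: they are total, extend `σ` and `μ`, and for every
non-input vertex `i ∈ W` there is an edge `(j, i) ∈ E` with
`μ' i = μ' j · σ' (j, i)`. -/
def Witnessing {V : Type} (E : Set (V × V)) (σ : V × V → Option Bool)
    (μ : V → Option Bool) (I : Set V) (W : Set V)
    (σ' : V × V → Bool) (μ' : V → Bool) : Prop :=
  (∀ e s, σ e = some s → σ' e = s) ∧
  (∀ i s, μ i = some s → μ' i = s) ∧
  (∀ i ∈ W, i ∉ I → ∃ j, (j, i) ∈ E ∧ μ' i = signMul (μ' j) (σ' (j, i)))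

/-- The influence graph `(V, E, σ)` with inputs `I` and the partial vertex
labeling `μ` are consistent: there are witnessing labelings for all of `V`. -/
def Consistent {V : Type} (E : Set (V × V)) (σ : V × V → Option Bool)
    (μ : V → Option Bool) (I : Set V) : Prop :=
  ∃ σ' μ', Witnessing E σ μ I Set.univ σ' μ'

/-- `W` is a Minimal Inconsistent Core: there are no witnessing labelings for `W`,
but every proper subset of `W` has witnessing labelings. -/
def IsMIC {V : Type} (E : Set (V × V)) (σ : V × V → Option Bool)
    (μ : V → Option Bool) (I : Set V) (W : Set V) : Prop :=
  (¬ ∃ σ' μ', Witnessing E σ μ I W σ' μ') ∧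
  (∀ W', W' ⊂ W → ∃ σ' μ', Witnessing E σ μ I W' σ' μ')

/-- A disjunctive rule `(H, B⁺, B⁻)` over atoms `A`. -/
structure Rule (A : Type) where
  head : Set A
  pos : Set A
  neg : Set A

/-- `X` satisfies a rule: if `B⁺ ⊆ X` and `B⁻ ∩ X = ∅` then `H ∩ X ≠ ∅`. -/
def RuleSat {A : Type} (X : Set A) (r : Rule A) : Prop :=
  r.pos ⊆ X → r.neg ∩ X = ∅ → (r.head ∩ X).Nonempty

/-- The reduct of a program `P` relative to `X`. -/
def reduct {A : Type} (P : Set (Rule A)) (X : Set A) : Set (Rule A) :=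
  {r' | ∃ r ∈ P, r.neg ∩ X = ∅ ∧ r' = ⟨r.head, r.pos, ∅⟩}

/-- `X` is an answer set of `P`: `X` is a `⊆`-minimal set of atoms satisfying
every rule of the reduct `P^X`. -/
def IsAnswerSet {A : Type} (P : Set (Rule A)) (X : Set A) : Prop :=
  (∀ r ∈ reduct P X, RuleSat X r) ∧
  ∀ Y, Y ⊆ X → (∀ r ∈ reduct P X, RuleSat Y r) → Y = X

/-- A fact: a rule with a singleton head and empty body. -/
def fact {A : Type} (a : A) : Rule A := ⟨{a}, ∅, ∅⟩

/-- Ground atoms of the MIC-extraction encoding. -/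
inductive AtomD (V : Type) : Type
  | vertex : V → AtomD V
  | edge : V → V → AtomD V
  | observedE : V → V → Bool → AtomD V
  | observedV : V → Bool → AtomD V
  | input : V → AtomD V
  | labelV : V → Bool → AtomD V
  | labelE : V → V → Bool → AtomD V
  | active : V → AtomD V
  | inactive : V → AtomD V
  | edgeMIC : V → V → AtomD V
  | vertexMIC : V → AtomD V
  | opposite : V → V → AtomD V
  | bottom : AtomD V
  | labelV' : V → V → Bool → AtomD V
  | labelE' : V → V → V → Bool → AtomD V
  | receive' : V → V → Bool → AtomD V

/-- The instance translation `τ((V,E,σ),μ)`: facts describing the influence graph,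
the partial labelings, and the input vertices. -/
def tauD {V : Type} (E : Set (V × V)) (σ : V × V → Option Bool)
    (μ : V → Option Bool) (I : Set V) : Set (Rule (AtomD V)) :=
  {r | (∃ i : V, r = fact (AtomD.vertex i)) ∨
       (∃ j i, (j, i) ∈ E ∧ r = fact (AtomD.edge j i)) ∨
       (∃ j i s, (j, i) ∈ E ∧ σ (j, i) = some s ∧ r = fact (AtomD.observedE j i s)) ∨
       (∃ i s, μ i = some s ∧ r = fact (AtomD.observedV i s)) ∨
       (∃ i ∈ I, r = fact (AtomD.input i))}

/-- The MIC-extraction program `P_D` (ground instantiation over all vertices,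
edges, and signs). -/
def PD {V : Type} (E : Set (V × V)) : Set (Rule (AtomD V)) :=
  {r | (∃ v s, r = ⟨{AtomD.labelV v s}, {AtomD.observedV v s}, ∅⟩) ∨
       (∃ u v s, (u, v) ∈ E ∧ r = ⟨{AtomD.labelE u v s}, {AtomD.observedE u v s}, ∅⟩) ∨
       (∃ v : V, r = ⟨{AtomD.active v, AtomD.inactive v},
          {AtomD.vertex v}, {AtomD.input v}⟩) ∨
       (∃ u v, (u, v) ∈ E ∧ r = ⟨{AtomD.edgeMIC u v},
          {AtomD.edge u v, AtomD.active v}, ∅⟩) ∨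
       (∃ u v, (u, v) ∈ E ∧ r = ⟨{AtomD.vertexMIC u}, {AtomD.edgeMIC u v}, ∅⟩) ∨
       (∃ v : V, r = ⟨{AtomD.vertexMIC v}, {AtomD.active v}, ∅⟩) ∨
       (∃ v : V, r = ⟨{AtomD.labelV v true, AtomD.labelV v false},
          {AtomD.vertexMIC v}, ∅⟩) ∨
       (∃ u v, (u, v) ∈ E ∧ r = ⟨{AtomD.labelE u v true, AtomD.labelE u v false},
          {AtomD.edgeMIC u v}, ∅⟩) ∨
       (∃ u v s, (u, v) ∈ E ∧ r = ⟨{AtomD.opposite u v},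
          {AtomD.labelE u v false, AtomD.labelV u s, AtomD.labelV v s}, ∅⟩) ∨
       (∃ u v s t, (u, v) ∈ E ∧ s ≠ t ∧ r = ⟨{AtomD.opposite u v},
          {AtomD.labelE u v true, AtomD.labelV u s, AtomD.labelV v t}, ∅⟩) ∨
       (∃ v : V, r = ⟨{AtomD.bottom},
          insert (AtomD.active v) {a | ∃ u, (u, v) ∈ E ∧ a = AtomD.opposite u v}, ∅⟩) ∨
       (r = ⟨∅, ∅, {AtomD.bottom}⟩) ∨
       (∃ v s, r = ⟨{AtomD.labelV v s}, {AtomD.bottom, AtomD.vertex v}, ∅⟩) ∨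
       (∃ u v s, (u, v) ∈ E ∧ r = ⟨{AtomD.labelE u v s},
          {AtomD.bottom, AtomD.edge u v}, ∅⟩) ∨
       (∃ w v : V, r = ⟨{AtomD.labelV' w v true, AtomD.labelV' w v false},
          {AtomD.active w, AtomD.vertexMIC v}, ∅⟩) ∨
       (∃ w u v, (u, v) ∈ E ∧ r = ⟨{AtomD.labelE' w u v true, AtomD.labelE' w u v false},
          {AtomD.active w, AtomD.edgeMIC u v}, ∅⟩) ∨
       (∃ w v s, r = ⟨{AtomD.labelV' w v s}, {AtomD.active w, AtomD.observedV v s}, ∅⟩) ∨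
       (∃ w u v s, (u, v) ∈ E ∧ r = ⟨{AtomD.labelE' w u v s},
          {AtomD.active w, AtomD.observedE u v s}, ∅⟩) ∨
       (∃ w u v s, (u, v) ∈ E ∧ v ≠ w ∧ r = ⟨{AtomD.receive' w v true},
          {AtomD.labelE' w u v s, AtomD.labelV' w u s}, ∅⟩) ∨
       (∃ w u v s t, (u, v) ∈ E ∧ v ≠ w ∧ s ≠ t ∧ r = ⟨{AtomD.receive' w v false},
          {AtomD.labelE' w u v s, AtomD.labelV' w u t}, ∅⟩) ∨
       (∃ w v s, v ≠ w ∧ r = ⟨∅, {AtomD.labelV' w v s, AtomD.active v},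
          {AtomD.receive' w v s}⟩)}


section MICInfra

open AtomD

lemma mem_reduct_of {A : Type} {P : Set (Rule A)} {X : Set A} {r : Rule A}
    (hr : r ∈ P) (hneg : r.neg ∩ X = ∅) :
    (⟨r.head, r.pos, ∅⟩ : Rule A) ∈ reduct P X := ⟨r, hr, hneg, rfl⟩

lemma head_hit {A : Type} {P : Set (Rule A)} {X Y : Set A}
    (hsat : ∀ r ∈ reduct P X, RuleSat Y r)
    {hd pos neg : Set A} (hr : (⟨hd, pos, neg⟩ : Rule A) ∈ P)
    (hneg : neg ∩ X = ∅) (hpos : pos ⊆ Y) : (hd ∩ Y).Nonempty :=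
  hsat _ (mem_reduct_of hr hneg) hpos (Set.empty_inter Y)

lemma single_hit {A : Type} {P : Set (Rule A)} {X Y : Set A}
    (hsat : ∀ r ∈ reduct P X, RuleSat Y r)
    {a : A} {pos neg : Set A} (hr : (⟨{a}, pos, neg⟩ : Rule A) ∈ P)
    (hneg : neg ∩ X = ∅) (hpos : pos ⊆ Y) : a ∈ Y := by
  obtain ⟨b, hb, hbY⟩ := head_hit hsat hr hneg hpos
  rwa [Set.mem_singleton_iff.mp hb] at hbY

lemma no_fire {A : Type} {P : Set (Rule A)} {X Y : Set A}
    (hsat : ∀ r ∈ reduct P X, RuleSat Y r)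
    {pos neg : Set A} (hr : (⟨∅, pos, neg⟩ : Rule A) ∈ P)
    (hneg : neg ∩ X = ∅) : ¬ pos ⊆ Y := by
  intro hpos
  obtain ⟨b, hb, -⟩ := head_hit hsat hr hneg hpos
  exact hb

/-- generic removal lemma for proving "junk-freeness" by minimality -/
lemma removal {A : Type} {P : Set (Rule A)} {X : Set A} (hX : IsAnswerSet P X)
    {a : A} (ha : a ∈ X)
    (H : ∀ r ∈ P, r.neg ∩ X = ∅ → a ∈ r.head → a ∉ r.pos → r.pos ⊆ X →
      ((r.head ∩ X) \ {a}).Nonempty) : False := by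
  have hsub : X \ {a} ⊆ X := Set.diff_subset
  have hsat : ∀ r ∈ reduct P X, RuleSat (X \ {a}) r := by
    rintro r ⟨r₀, hr₀, hneg, rfl⟩
    intro hpos _
    have hposX : r₀.pos ⊆ X := hpos.trans hsub
    have hhX : (r₀.head ∩ X).Nonempty :=
      hX.1 ⟨r₀.head, r₀.pos, ∅⟩ ⟨r₀, hr₀, hneg, rfl⟩ hposX (Set.empty_inter X)
    by_cases hah : a ∈ r₀.head
    · by_cases hap : a ∈ r₀.pos
      · exact absurd rfl (hpos hap).2
      · obtain ⟨b, hb, hbn⟩ := H r₀ hr₀ hneg hah hap hposX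
        exact ⟨b, hb.1, hb.2, hbn⟩
    · obtain ⟨b, hb1, hb2⟩ := hhX
      exact ⟨b, hb1, hb2, fun h => hah (Set.mem_singleton_iff.mp h ▸ hb1)⟩
  have := hX.2 (X \ {a}) hsub hsat
  have : a ∈ X \ {a} := this.symm ▸ ha
  exact this.2 rfl

variable {V : Type}

section RuleLemmas
variable (E : Set (V × V)) (σ : V × V → Option Bool) (μ : V → Option Bool) (I : Set V)

lemma pd1 (v : V) (s : Bool) :
    (⟨{labelV v s}, {observedV v s}, ∅⟩ : Rule (AtomD V)) ∈ PD E :=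
  Or.inl ⟨v, s, rfl⟩
lemma pd2 {u v : V} (s : Bool) (h : (u, v) ∈ E) :
    (⟨{labelE u v s}, {observedE u v s}, ∅⟩ : Rule (AtomD V)) ∈ PD E :=
  Or.inr <| Or.inl ⟨u, v, s, h, rfl⟩
lemma pd3 (v : V) :
    (⟨{active v, inactive v}, {vertex v}, {input v}⟩ : Rule (AtomD V)) ∈ PD E :=
  Or.inr <| Or.inr <| Or.inl ⟨v, rfl⟩
lemma pd4 {u v : V} (h : (u, v) ∈ E) :
    (⟨{edgeMIC u v}, {edge u v, active v}, ∅⟩ : Rule (AtomD V)) ∈ PD E :=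
  Or.inr <| Or.inr <| Or.inr <| Or.inl ⟨u, v, h, rfl⟩
lemma pd5 {u v : V} (h : (u, v) ∈ E) :
    (⟨{vertexMIC u}, {edgeMIC u v}, ∅⟩ : Rule (AtomD V)) ∈ PD E :=
  Or.inr <| Or.inr <| Or.inr <| Or.inr <| Or.inl ⟨u, v, h, rfl⟩
lemma pd6 (v : V) :
    (⟨{vertexMIC v}, {active v}, ∅⟩ : Rule (AtomD V)) ∈ PD E :=
  Or.inr <| Or.inr <| Or.inr <| Or.inr <| Or.inr <| Or.inl ⟨v, rfl⟩
lemma pd7 (v : V) :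
    (⟨{labelV v true, labelV v false}, {vertexMIC v}, ∅⟩ : Rule (AtomD V)) ∈ PD E :=
  Or.inr <| Or.inr <| Or.inr <| Or.inr <| Or.inr <| Or.inr <| Or.inl ⟨v, rfl⟩
lemma pd8 {u v : V} (h : (u, v) ∈ E) :
    (⟨{labelE u v true, labelE u v false}, {edgeMIC u v}, ∅⟩ : Rule (AtomD V)) ∈ PD E :=
  Or.inr <| Or.inr <| Or.inr <| Or.inr <| Or.inr <| Or.inr <| Or.inr <| Or.inl ⟨u, v, h, rfl⟩
lemma pd9 {u v : V} (s : Bool) (h : (u, v) ∈ E) :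
    (⟨{opposite u v}, {labelE u v false, labelV u s, labelV v s}, ∅⟩ : Rule (AtomD V)) ∈ PD E :=
  Or.inr <| Or.inr <| Or.inr <| Or.inr <| Or.inr <| Or.inr <| Or.inr <| Or.inr <|
    Or.inl ⟨u, v, s, h, rfl⟩
lemma pd10 {u v : V} {s t : Bool} (h : (u, v) ∈ E) (hst : s ≠ t) :
    (⟨{opposite u v}, {labelE u v true, labelV u s, labelV v t}, ∅⟩ : Rule (AtomD V)) ∈ PD E :=
  Or.inr <| Or.inr <| Or.inr <| Or.inr <| Or.inr <| Or.inr <| Or.inr <| Or.inr <|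
    Or.inr <| Or.inl ⟨u, v, s, t, h, hst, rfl⟩
lemma pd11 (v : V) :
    (⟨{bottom}, insert (active v) {a | ∃ u, (u, v) ∈ E ∧ a = opposite u v}, ∅⟩ :
      Rule (AtomD V)) ∈ PD E :=
  Or.inr <| Or.inr <| Or.inr <| Or.inr <| Or.inr <| Or.inr <| Or.inr <| Or.inr <|
    Or.inr <| Or.inr <| Or.inl ⟨v, rfl⟩
lemma pd12 : (⟨∅, ∅, {bottom}⟩ : Rule (AtomD V)) ∈ PD E :=
  Or.inr <| Or.inr <| Or.inr <| Or.inr <| Or.inr <| Or.inr <| Or.inr <| Or.inr <|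
    Or.inr <| Or.inr <| Or.inr <| Or.inl rfl
lemma pd13 (v : V) (s : Bool) :
    (⟨{labelV v s}, {bottom, vertex v}, ∅⟩ : Rule (AtomD V)) ∈ PD E :=
  Or.inr <| Or.inr <| Or.inr <| Or.inr <| Or.inr <| Or.inr <| Or.inr <| Or.inr <|
    Or.inr <| Or.inr <| Or.inr <| Or.inr <| Or.inl ⟨v, s, rfl⟩
lemma pd14 {u v : V} (s : Bool) (h : (u, v) ∈ E) :
    (⟨{labelE u v s}, {bottom, edge u v}, ∅⟩ : Rule (AtomD V)) ∈ PD E :=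
  Or.inr <| Or.inr <| Or.inr <| Or.inr <| Or.inr <| Or.inr <| Or.inr <| Or.inr <|
    Or.inr <| Or.inr <| Or.inr <| Or.inr <| Or.inr <| Or.inl ⟨u, v, s, h, rfl⟩
lemma pd15 (w v : V) :
    (⟨{labelV' w v true, labelV' w v false}, {active w, vertexMIC v}, ∅⟩ :
      Rule (AtomD V)) ∈ PD E :=
  Or.inr <| Or.inr <| Or.inr <| Or.inr <| Or.inr <| Or.inr <| Or.inr <| Or.inr <|
    Or.inr <| Or.inr <| Or.inr <| Or.inr <| Or.inr <| Or.inr <| Or.inl ⟨w, v, rfl⟩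
lemma pd16 {u v : V} (w : V) (h : (u, v) ∈ E) :
    (⟨{labelE' w u v true, labelE' w u v false}, {active w, edgeMIC u v}, ∅⟩ :
      Rule (AtomD V)) ∈ PD E :=
  Or.inr <| Or.inr <| Or.inr <| Or.inr <| Or.inr <| Or.inr <| Or.inr <| Or.inr <|
    Or.inr <| Or.inr <| Or.inr <| Or.inr <| Or.inr <| Or.inr <| Or.inr <|
    Or.inl ⟨w, u, v, h, rfl⟩
lemma pd17 (w v : V) (s : Bool) :
    (⟨{labelV' w v s}, {active w, observedV v s}, ∅⟩ : Rule (AtomD V)) ∈ PD E :=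
  Or.inr <| Or.inr <| Or.inr <| Or.inr <| Or.inr <| Or.inr <| Or.inr <| Or.inr <|
    Or.inr <| Or.inr <| Or.inr <| Or.inr <| Or.inr <| Or.inr <| Or.inr <| Or.inr <|
    Or.inl ⟨w, v, s, rfl⟩
lemma pd18 {u v : V} (w : V) (s : Bool) (h : (u, v) ∈ E) :
    (⟨{labelE' w u v s}, {active w, observedE u v s}, ∅⟩ : Rule (AtomD V)) ∈ PD E :=
  Or.inr <| Or.inr <| Or.inr <| Or.inr <| Or.inr <| Or.inr <| Or.inr <| Or.inr <|
    Or.inr <| Or.inr <| Or.inr <| Or.inr <| Or.inr <| Or.inr <| Or.inr <| Or.inr <|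
    Or.inr <| Or.inl ⟨w, u, v, s, h, rfl⟩
lemma pd19 {u v w : V} (s : Bool) (h : (u, v) ∈ E) (hvw : v ≠ w) :
    (⟨{receive' w v true}, {labelE' w u v s, labelV' w u s}, ∅⟩ : Rule (AtomD V)) ∈ PD E :=
  Or.inr <| Or.inr <| Or.inr <| Or.inr <| Or.inr <| Or.inr <| Or.inr <| Or.inr <|
    Or.inr <| Or.inr <| Or.inr <| Or.inr <| Or.inr <| Or.inr <| Or.inr <| Or.inr <|
    Or.inr <| Or.inr <| Or.inl ⟨w, u, v, s, h, hvw, rfl⟩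
lemma pd20 {u v w : V} {s t : Bool} (h : (u, v) ∈ E) (hvw : v ≠ w) (hst : s ≠ t) :
    (⟨{receive' w v false}, {labelE' w u v s, labelV' w u t}, ∅⟩ : Rule (AtomD V)) ∈ PD E :=
  Or.inr <| Or.inr <| Or.inr <| Or.inr <| Or.inr <| Or.inr <| Or.inr <| Or.inr <|
    Or.inr <| Or.inr <| Or.inr <| Or.inr <| Or.inr <| Or.inr <| Or.inr <| Or.inr <|
    Or.inr <| Or.inr <| Or.inr <| Or.inl ⟨w, u, v, s, t, h, hvw, hst, rfl⟩
lemma pd21 {v w : V} (s : Bool) (hvw : v ≠ w) :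
    (⟨∅, {labelV' w v s, active v}, {receive' w v s}⟩ : Rule (AtomD V)) ∈ PD E :=
  Or.inr <| Or.inr <| Or.inr <| Or.inr <| Or.inr <| Or.inr <| Or.inr <| Or.inr <|
    Or.inr <| Or.inr <| Or.inr <| Or.inr <| Or.inr <| Or.inr <| Or.inr <| Or.inr <|
    Or.inr <| Or.inr <| Or.inr <| Or.inr ⟨w, v, s, hvw, rfl⟩

lemma tf1 (i : V) : fact (vertex i) ∈ tauD E σ μ I := Or.inl ⟨i, rfl⟩
lemma tf2 {j i : V} (h : (j, i) ∈ E) : fact (edge j i) ∈ tauD E σ μ I :=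
  Or.inr <| Or.inl ⟨j, i, h, rfl⟩
lemma tf3 {j i : V} {s : Bool} (h : (j, i) ∈ E) (hs : σ (j, i) = some s) :
    fact (observedE j i s) ∈ tauD E σ μ I :=
  Or.inr <| Or.inr <| Or.inl ⟨j, i, s, h, hs, rfl⟩
lemma tf4 {i : V} {s : Bool} (hs : μ i = some s) :
    fact (observedV i s) ∈ tauD E σ μ I :=
  Or.inr <| Or.inr <| Or.inr <| Or.inl ⟨i, s, hs, rfl⟩
lemma tf5 {i : V} (h : i ∈ I) : fact (input i) ∈ tauD E σ μ I :=
  Or.inr <| Or.inr <| Or.inr <| Or.inr ⟨i, h, rfl⟩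

end RuleLemmas
end MICInfra

section MICDefs
open AtomD
variable {V : Type}

lemma signMul_self (s : Bool) : signMul s s = true := by cases s <;> rfl
lemma signMul_ne {s t : Bool} (h : t ≠ s) : signMul t s = false := by
  cases s <;> cases t <;> simp_all [signMul]

/-- the intended answer set, given a MIC `W` with chosen witnessing labelings
`mw w`, `sgw w` for each `W \ {w}`. -/
def XA (E : Set (V × V)) (σ : V × V → Option Bool) (μ : V → Option Bool) (I : Set V)
    (W : Set V) (sgw : V → V × V → Bool) (mw : V → V → Bool) : Set (AtomD V) := fun a =>
  match a with
  | vertex _ => True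
  | edge u v => (u, v) ∈ E
  | observedE u v s => σ (u, v) = some s
  | observedV v s => μ v = some s
  | input i => i ∈ I
  | labelV _ _ => True
  | labelE u v _ => (u, v) ∈ E
  | active v => v ∈ W
  | inactive v => v ∉ W ∧ v ∉ I
  | edgeMIC u v => (u, v) ∈ E ∧ v ∈ W
  | vertexMIC v => v ∈ W ∨ ∃ v', (v, v') ∈ E ∧ v' ∈ W
  | opposite u v => (u, v) ∈ E
  | bottom => True
  | labelV' w v s => w ∈ W ∧ mw w v = s ∧
      ((v ∈ W ∨ ∃ v', (v, v') ∈ E ∧ v' ∈ W) ∨ μ v = some s)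
  | labelE' w u v s => w ∈ W ∧ (u, v) ∈ E ∧ sgw w (u, v) = s ∧
      (v ∈ W ∨ σ (u, v) = some s)
  | receive' w v s => w ∈ W ∧ v ≠ w ∧ ∃ u, (u, v) ∈ E ∧
      (v ∈ W ∨ σ (u, v) = some (sgw w (u, v))) ∧
      ((u ∈ W ∨ ∃ v', (u, v') ∈ E ∧ v' ∈ W) ∨ μ u = some (mw w u)) ∧
      s = signMul (mw w u) (sgw w (u, v))

/-- upper bound for answer sets: no junk on deterministic atoms. -/
def UB (E : Set (V × V)) (σ : V × V → Option Bool) (μ : V → Option Bool) (I : Set V)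
    (X : Set (AtomD V)) : Set (AtomD V) := fun a =>
  match a with
  | observedE u v s => σ (u, v) = some s
  | observedV v s => μ v = some s
  | active v => v ∉ I
  | receive' w v s => v ≠ w ∧ ∃ u t t', labelE' w u v t' ∈ X ∧ labelV' w u t ∈ X ∧
      (u, v) ∈ E ∧ s = signMul t t'
  | _ => True

end MICDefs

section SignMulExtra
lemma signMul_left_injective {a b e : Bool} (h : signMul a e = signMul b e) : a = b := by
  cases a <;> cases b <;> cases e <;> simp_all [signMul]
lemma signMul_right_injective {a e1 e2 : Bool} (h : signMul a e1 = signMul a e2) : e1 = e2 := by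
  cases a <;> cases e1 <;> cases e2 <;> simp_all [signMul]
end SignMulExtra

section Pick
noncomputable def pick (p : Bool → Prop) (d : Bool) : Bool :=
  letI := Classical.propDecidable (p true ↔ p false)
  letI := Classical.propDecidable (p true)
  if p true ↔ p false then d else if p true then true else false

lemma pick_eq {p : Bool → Prop} {s d : Bool} (hs : p s) (hd : d = s) :
    pick p d = s := by
  unfold pick
  by_cases h1 : p true ↔ p false
  · rw [if_pos h1]; exact hd
  · rw [if_neg h1]
    cases s
    · rw [if_neg]; intro ht; exact h1 ⟨fun _ => hs, fun _ => ht⟩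
    · rw [if_pos hs]

lemma pick_eq_unique {p : Bool → Prop} {t : Bool} (d : Bool) (hs : p t)
    (huniq : ∀ t2, p t2 → t2 = t) : pick p d = t := by
  unfold pick
  have h1 : ¬ (p true ↔ p false) := by
    intro h1
    cases t
    · exact absurd (huniq true (h1.mpr hs)) (by simp)
    · exact absurd (huniq false (h1.mp hs)) (by simp)
  rw [if_neg h1]
  cases t
  · rw [if_neg]; intro ht; exact absurd (huniq true ht) (by simp)
  · rw [if_pos hs]
end Pick

section PartA
open AtomD
variable {V : Type} {E : Set (V × V)} {σ : V × V → Option Bool} {μ : V → Option Bool}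
  {I : Set V} {W : Set V} {sgw : V → V × V → Bool} {mw : V → V → Bool}

lemma XA_sat (hWI : ∀ v ∈ W, v ∉ I)
    (hwit : ∀ w ∈ W, Witnessing E σ μ I (W \ {w}) (sgw w) (mw w)) :
    ∀ r ∈ reduct (PD E ∪ tauD E σ μ I) (XA E σ μ I W sgw mw),
      RuleSat (XA E σ μ I W sgw mw) r := by
  set X := XA E σ μ I W sgw mw with hX
  rintro r ⟨r₀, hr₀, hneg, rfl⟩
  rcases hr₀ with hpd | htf
  · rcases hpd with ⟨v,s,rfl⟩ | ⟨u,v,s,hE,rfl⟩ | ⟨v,rfl⟩ | ⟨u,v,hE,rfl⟩ | ⟨u,v,hE,rfl⟩ |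
      ⟨v,rfl⟩ | ⟨v,rfl⟩ | ⟨u,v,hE,rfl⟩ | ⟨u,v,s,hE,rfl⟩ | ⟨u,v,s,t,hE,hst,rfl⟩ |
      ⟨v,rfl⟩ | rfl | ⟨v,s,rfl⟩ | ⟨u,v,s,hE,rfl⟩ | ⟨w,v,rfl⟩ | ⟨w,u,v,hE,rfl⟩ |
      ⟨w,v,s,rfl⟩ | ⟨w,u,v,s,hE,rfl⟩ | ⟨w,u,v,s,hE,hvw,rfl⟩ |
      ⟨w,u,v,s,t,hE,hvw,hst,rfl⟩ | ⟨w,v,s,hvw,rfl⟩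
    -- 1
    · exact fun _ _ => ⟨labelV v s, rfl, trivial⟩
    -- 2
    · exact fun _ _ => ⟨labelE u v s, rfl, hE⟩
    -- 3
    · intro hpos _
      have hvI : v ∉ I := fun h =>
        Set.eq_empty_iff_forall_notMem.mp hneg (input v) ⟨rfl, h⟩
      by_cases hv : v ∈ W
      · exact ⟨active v, Set.mem_insert _ _, hv⟩
      · exact ⟨inactive v, Set.mem_insert_of_mem _ rfl, hv, hvI⟩
    -- 4
    · intro hpos _
      have h1 : (u, v) ∈ E := hpos (Set.mem_insert _ _)
      have h2 : v ∈ W := hpos (Set.mem_insert_of_mem _ rfl)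
      exact ⟨edgeMIC u v, rfl, h1, h2⟩
    -- 5
    · intro hpos _
      have h : (u, v) ∈ E ∧ v ∈ W := hpos rfl
      exact ⟨vertexMIC u, rfl, Or.inr ⟨v, h.1, h.2⟩⟩
    -- 6
    · intro hpos _
      exact ⟨vertexMIC v, rfl, Or.inl (hpos rfl)⟩
    -- 7
    · exact fun _ _ => ⟨labelV v true, Set.mem_insert _ _, trivial⟩
    -- 8
    · exact fun _ _ => ⟨labelE u v true, Set.mem_insert _ _, hE⟩
    -- 9
    · exact fun _ _ => ⟨opposite u v, rfl, hE⟩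
    -- 10
    · exact fun _ _ => ⟨opposite u v, rfl, hE⟩
    -- 11
    · exact fun _ _ => ⟨bottom, rfl, trivial⟩
    -- 12
    · exact fun _ _ =>
        absurd (⟨rfl, trivial⟩ : bottom ∈ ({bottom} : Set (AtomD V)) ∩ X)
          (Set.eq_empty_iff_forall_notMem.mp hneg bottom).elim
    -- 13
    · exact fun _ _ => ⟨labelV v s, rfl, trivial⟩
    -- 14
    · exact fun _ _ => ⟨labelE u v s, rfl, hE⟩
    -- 15
    · intro hpos _
      have hw : w ∈ W := hpos (Set.mem_insert _ _)
      have hv : v ∈ W ∨ ∃ v', (v, v') ∈ E ∧ v' ∈ W := hpos (Set.mem_insert_of_mem _ rfl)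
      refine ⟨labelV' w v (mw w v), ?_, hw, rfl, Or.inl hv⟩
      cases hmw : mw w v
      · exact Set.mem_insert_of_mem _ rfl
      · exact Set.mem_insert _ _
    -- 16
    · intro hpos _
      have hw : w ∈ W := hpos (Set.mem_insert _ _)
      have hv : (u, v) ∈ E ∧ v ∈ W := hpos (Set.mem_insert_of_mem _ rfl)
      refine ⟨labelE' w u v (sgw w (u, v)), ?_, hw, hE, rfl, Or.inl hv.2⟩
      cases hsg : sgw w (u, v)
      · exact Set.mem_insert_of_mem _ rfl
      · exact Set.mem_insert _ _
    -- 17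
    · intro hpos _
      have hw : w ∈ W := hpos (Set.mem_insert _ _)
      have hobs : μ v = some s := hpos (Set.mem_insert_of_mem _ rfl)
      exact ⟨labelV' w v s, rfl, hw, (hwit w hw).2.1 v s hobs, Or.inr hobs⟩
    -- 18
    · intro hpos _
      have hw : w ∈ W := hpos (Set.mem_insert _ _)
      have hobs : σ (u, v) = some s := hpos (Set.mem_insert_of_mem _ rfl)
      exact ⟨labelE' w u v s, rfl, hw, hE, (hwit w hw).1 (u, v) s hobs, Or.inr hobs⟩
    -- 19
    · intro hpos _
      have h1 : w ∈ W ∧ (u, v) ∈ E ∧ sgw w (u, v) = s ∧ (v ∈ W ∨ σ (u, v) = some s) :=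
        hpos (Set.mem_insert _ _)
      have h2 : w ∈ W ∧ mw w u = s ∧
          ((u ∈ W ∨ ∃ v', (u, v') ∈ E ∧ v' ∈ W) ∨ μ u = some s) :=
        hpos (Set.mem_insert_of_mem _ rfl)
      obtain ⟨hw, hE', hsg, hd1⟩ := h1
      obtain ⟨-, hmw, hd2⟩ := h2
      refine ⟨receive' w v true, rfl, hw, hvw, u, hE, ?_, ?_, ?_⟩
      · rw [hsg]; exact hd1
      · rw [hmw]; exact hd2
      · rw [hmw, hsg]; exact (signMul_self s).symm
    -- 20
    · intro hpos _
      have h1 : w ∈ W ∧ (u, v) ∈ E ∧ sgw w (u, v) = s ∧ (v ∈ W ∨ σ (u, v) = some s) :=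
        hpos (Set.mem_insert _ _)
      have h2 : w ∈ W ∧ mw w u = t ∧
          ((u ∈ W ∨ ∃ v', (u, v') ∈ E ∧ v' ∈ W) ∨ μ u = some t) :=
        hpos (Set.mem_insert_of_mem _ rfl)
      obtain ⟨hw, hE', hsg, hd1⟩ := h1
      obtain ⟨-, hmw, hd2⟩ := h2
      refine ⟨receive' w v false, rfl, hw, hvw, u, hE, ?_, ?_, ?_⟩
      · rw [hsg]; exact hd1
      · rw [hmw]; exact hd2
      · rw [hmw, hsg]; exact (signMul_ne fun h => hst (h.symm)).symm
    -- 21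
    · intro hpos _
      exfalso
      have h1 : w ∈ W ∧ mw w v = s ∧
          ((v ∈ W ∨ ∃ v', (v, v') ∈ E ∧ v' ∈ W) ∨ μ v = some s) :=
        hpos (Set.mem_insert _ _)
      have h2 : v ∈ W := hpos (Set.mem_insert_of_mem _ rfl)
      obtain ⟨hw, hmw, -⟩ := h1
      obtain ⟨j, hjE, heq⟩ := (hwit w hw).2.2 v ⟨h2, fun h => hvw h⟩ (hWI v h2)
      have hr : receive' w v s ∈ X :=
        ⟨hw, hvw, j, hjE, Or.inl h2, Or.inl (Or.inr ⟨v, hjE, h2⟩), by rw [← hmw]; exact heq⟩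
      exact Set.eq_empty_iff_forall_notMem.mp hneg (receive' w v s) ⟨rfl, hr⟩
  · rcases htf with ⟨i,rfl⟩ | ⟨j,i,hE,rfl⟩ | ⟨j,i,s,hE,hs,rfl⟩ | ⟨i,s,hs,rfl⟩ | ⟨i,hI,rfl⟩
    · exact fun _ _ => ⟨vertex i, rfl, trivial⟩
    · exact fun _ _ => ⟨edge j i, rfl, hE⟩
    · exact fun _ _ => ⟨observedE j i s, rfl, hs⟩
    · exact fun _ _ => ⟨observedV i s, rfl, hs⟩
    · exact fun _ _ => ⟨input i, rfl, hI⟩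

end PartA

section PartA2
open AtomD
variable {V : Type} {E : Set (V × V)} {σ : V × V → Option Bool} {μ : V → Option Bool}
  {I : Set V} {W : Set V} {sgw : V → V × V → Bool} {mw : V → V → Bool}

lemma XA_min (hσ : ∀ e, σ e ≠ none → e ∈ E) (hWI : ∀ v ∈ W, v ∉ I)
    (hwit : ∀ w ∈ W, Witnessing E σ μ I (W \ {w}) (sgw w) (mw w))
    (hnowit : ¬ ∃ σ' μ', Witnessing E σ μ I W σ' μ')
    (Y : Set (AtomD V)) (hYX : Y ⊆ XA E σ μ I W sgw mw)
    (hsat : ∀ r ∈ reduct (PD E ∪ tauD E σ μ I) (XA E σ μ I W sgw mw), RuleSat Y r) :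
    Y = XA E σ μ I W sgw mw := by
  set X := XA E σ μ I W sgw mw with hXdef
  have hP : ∀ {r : Rule (AtomD V)}, r ∈ PD E → r ∈ PD E ∪ tauD E σ μ I := fun h => Or.inl h
  have hT : ∀ {r : Rule (AtomD V)}, r ∈ tauD E σ μ I → r ∈ PD E ∪ tauD E σ μ I :=
    fun h => Or.inr h
  have hemp : (∅ : Set (AtomD V)) ∩ X = ∅ := Set.empty_inter X
  -- facts
  have hvert : ∀ i, vertex i ∈ Y := fun i =>
    single_hit hsat (hT (tf1 E σ μ I i)) hemp (Set.empty_subset Y)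
  have hedge : ∀ u v, (u, v) ∈ E → edge u v ∈ Y := fun u v h =>
    single_hit hsat (hT (tf2 E σ μ I h)) hemp (Set.empty_subset Y)
  have hobsE : ∀ u v s, σ (u, v) = some s → observedE u v s ∈ Y := fun u v s h =>
    single_hit hsat (hT (tf3 E σ μ I (hσ (u, v) (h ▸ Option.some_ne_none s)) h)) hemp
      (Set.empty_subset Y)
  have hobsV : ∀ v s, μ v = some s → observedV v s ∈ Y := fun v s h =>
    single_hit hsat (hT (tf4 E σ μ I h)) hemp (Set.empty_subset Y)
  have hinput : ∀ i, i ∈ I → input i ∈ Y := fun i h =>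
    single_hit hsat (hT (tf5 E σ μ I h)) hemp (Set.empty_subset Y)
  -- active / inactive
  have hact : ∀ v ∈ W, active v ∈ Y := by
    intro v hv
    have hvI : v ∉ I := hWI v hv
    have hneg3 : ({input v} : Set (AtomD V)) ∩ X = ∅ :=
      Set.singleton_inter_eq_empty.mpr (fun h => hvI h)
    obtain ⟨a, ha, haY⟩ := head_hit hsat (hP (pd3 E v)) hneg3
      (Set.singleton_subset_iff.mpr (hvert v))
    rcases ha with rfl | ha
    · exact haY
    · rw [Set.mem_singleton_iff.mp ha] at haY
      exact absurd hv (hYX haY).1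
  have hinact : ∀ v, v ∉ W → v ∉ I → inactive v ∈ Y := by
    intro v hv hvI
    have hneg3 : ({input v} : Set (AtomD V)) ∩ X = ∅ :=
      Set.singleton_inter_eq_empty.mpr (fun h => hvI h)
    obtain ⟨a, ha, haY⟩ := head_hit hsat (hP (pd3 E v)) hneg3
      (Set.singleton_subset_iff.mpr (hvert v))
    rcases ha with rfl | ha
    · exact absurd (hYX haY) hv
    · rw [Set.mem_singleton_iff.mp ha] at haY
      exact haY
  -- labels from observations
  have f1 : ∀ v s, μ v = some s → labelV v s ∈ Y := fun v s h =>
    single_hit hsat (hP (pd1 E v s)) hemp (Set.singleton_subset_iff.mpr (hobsV v s h))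
  have f2 : ∀ u v s, σ (u, v) = some s → labelE u v s ∈ Y := fun u v s h =>
    single_hit hsat (hP (pd2 E s (hσ (u, v) (h ▸ Option.some_ne_none s)))) hemp
      (Set.singleton_subset_iff.mpr (hobsE u v s h))
  -- bottom must be in Y, else we get witnessing labelings for W
  have hbot : bottom ∈ Y := by
    by_contra hbot
    apply hnowit
    refine ⟨fun e => pick (fun b => labelE e.1 e.2 b ∈ Y) ((σ e).getD true),
            fun v => pick (fun b => labelV v b ∈ Y) ((μ v).getD true), ?_, ?_, ?_⟩
    · rintro ⟨u₀, v₀⟩ s hs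
      exact pick_eq (f2 u₀ v₀ s hs) (by rw [hs]; rfl)
    · intro v s hs
      exact pick_eq (f1 v s hs) (by rw [hs]; rfl)
    · intro v hv hvI
      -- find an edge into v whose "opposite" is not in Y
      have hnb : ¬ (insert (active v) {a | ∃ u, (u, v) ∈ E ∧ a = opposite u v} ⊆ Y) := by
        intro hsub
        exact hbot (single_hit hsat (hP (pd11 E v)) hemp hsub)
      have hexu : ∃ u, (u, v) ∈ E ∧ opposite u v ∉ Y := by
        by_contra hno
        push_neg at hno
        apply hnb
        rintro a (rfl | ⟨u, huE, rfl⟩)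
        · exact hact v hv
        · exact hno u huE
      obtain ⟨u, hE, hopp⟩ := hexu
      -- labels exist at u, v and on the edge
      have hvm : vertexMIC v ∈ Y :=
        single_hit hsat (hP (pd6 E v)) hemp (Set.singleton_subset_iff.mpr (hact v hv))
      have hem : edgeMIC u v ∈ Y := by
        refine single_hit hsat (hP (pd4 E hE)) hemp ?_
        rintro a (rfl | ha)
        · exact hedge u v hE
        · rw [Set.mem_singleton_iff.mp ha]; exact hact v hv
      have hum : vertexMIC u ∈ Y :=
        single_hit hsat (hP (pd5 E hE)) hemp (Set.singleton_subset_iff.mpr hem)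
      have hlv : ∀ x, vertexMIC x ∈ Y → ∃ t, labelV x t ∈ Y := by
        intro x hx
        obtain ⟨a, ha, haY⟩ := head_hit hsat (hP (pd7 E x)) hemp
          (Set.singleton_subset_iff.mpr hx)
        rcases ha with rfl | ha
        · exact ⟨true, haY⟩
        · rw [Set.mem_singleton_iff.mp ha] at haY; exact ⟨false, haY⟩
      obtain ⟨t, ht⟩ := hlv v hvm
      obtain ⟨su, hsu⟩ := hlv u hum
      have hle : ∃ e, labelE u v e ∈ Y := by
        obtain ⟨a, ha, haY⟩ := head_hit hsat (hP (pd8 E hE)) hemp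
          (Set.singleton_subset_iff.mpr hem)
        rcases ha with rfl | ha
        · exact ⟨true, haY⟩
        · rw [Set.mem_singleton_iff.mp ha] at haY; exact ⟨false, haY⟩
      obtain ⟨e, he⟩ := hle
      -- compatibility: any labels present must satisfy the sign equation
      have compat : ∀ t' t2 e2, labelV u t' ∈ Y → labelV v t2 ∈ Y → labelE u v e2 ∈ Y →
          t2 = signMul t' e2 := by
        intro t' t2 e2 h1 h2 h3
        by_contra hne
        apply hopp
        cases e2
        · -- negative edge label: then t2 = t' (else no contradiction), opposite fires
          have htt : t2 = t' := by
            cases t' <;> cases t2 <;> simp [signMul] at hne ⊢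
          subst htt
          refine single_hit hsat (hP (pd9 E t2 hE)) hemp ?_
          rintro a (rfl | rfl | ha)
          · exact h3
          · exact h1
          · rw [Set.mem_singleton_iff.mp ha]; exact h2
        · -- positive edge label: then t' ≠ t2, opposite fires
          have hst : t' ≠ t2 := by
            cases t' <;> cases t2 <;> simp [signMul] at hne ⊢
          refine single_hit hsat (hP (pd10 E hE hst)) hemp ?_
          rintro a (rfl | rfl | ha)
          · exact h3
          · exact h1
          · rw [Set.mem_singleton_iff.mp ha]; exact h2
      -- uniqueness of labels
      have uv : ∀ t2, labelV v t2 ∈ Y → t2 = t := fun t2 h =>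
        (compat su t2 e hsu h he).trans (compat su t e hsu ht he).symm
      have uu : ∀ s2, labelV u s2 ∈ Y → s2 = su := fun s2 h =>
        signMul_left_injective ((compat s2 t e h ht he).symm.trans (compat su t e hsu ht he))
      have ue : ∀ e2, labelE u v e2 ∈ Y → e2 = e := fun e2 h =>
        signMul_right_injective ((compat su t e2 hsu ht h).symm.trans (compat su t e hsu ht he))
      refine ⟨u, hE, ?_⟩
      show pick (fun b => labelV v b ∈ Y) ((μ v).getD true) =
        signMul (pick (fun b => labelV u b ∈ Y) ((μ u).getD true))
          (pick (fun b => labelE u v b ∈ Y) ((σ (u, v)).getD true))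
      rw [pick_eq_unique _ ht uv, pick_eq_unique _ hsu uu, pick_eq_unique _ he ue]
      exact compat su t e hsu ht he
  -- saturation: everything is in Y
  have hlV : ∀ v s, labelV v s ∈ Y := by
    intro v s
    refine single_hit hsat (hP (pd13 E v s)) hemp ?_
    rintro a (rfl | ha)
    · exact hbot
    · rw [Set.mem_singleton_iff.mp ha]; exact hvert v
  have hlE : ∀ u v s, (u, v) ∈ E → labelE u v s ∈ Y := by
    intro u v s hE
    refine single_hit hsat (hP (pd14 E s hE)) hemp ?_
    rintro a (rfl | ha)
    · exact hbot
    · rw [Set.mem_singleton_iff.mp ha]; exact hedge u v hE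
  have hoppY : ∀ u v, (u, v) ∈ E → opposite u v ∈ Y := by
    intro u v hE
    refine single_hit hsat (hP (pd9 E true hE)) hemp ?_
    rintro a (rfl | rfl | ha)
    · exact hlE u v false hE
    · exact hlV u true
    · rw [Set.mem_singleton_iff.mp ha]; exact hlV v true
  have hem : ∀ u v, (u, v) ∈ E → v ∈ W → edgeMIC u v ∈ Y := by
    intro u v hE hv
    refine single_hit hsat (hP (pd4 E hE)) hemp ?_
    rintro a (rfl | ha)
    · exact hedge u v hE
    · rw [Set.mem_singleton_iff.mp ha]; exact hact v hv
  have hvm : ∀ v, (v ∈ W ∨ ∃ v', (v, v') ∈ E ∧ v' ∈ W) → vertexMIC v ∈ Y := by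
    intro v hv
    rcases hv with hv | ⟨v', hE, hv'⟩
    · exact single_hit hsat (hP (pd6 E v)) hemp (Set.singleton_subset_iff.mpr (hact v hv))
    · exact single_hit hsat (hP (pd5 E hE)) hemp
        (Set.singleton_subset_iff.mpr (hem v v' hE hv'))
  have hlv' : ∀ w v s, labelV' w v s ∈ X → labelV' w v s ∈ Y := by
    intro w v s h
    obtain ⟨hw, hmw, hdisj⟩ := h
    rcases hdisj with hM | hμ
    · have hpos : ({active w, vertexMIC v} : Set (AtomD V)) ⊆ Y := by
        rintro a (rfl | ha)
        · exact hact w hw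
        · rw [Set.mem_singleton_iff.mp ha]; exact hvm v hM
      obtain ⟨a, ha, haY⟩ := head_hit hsat (hP (pd15 E w v)) hemp hpos
      rcases ha with rfl | ha
      · have : mw w v = true := (hYX haY).2.1
        rw [← hmw, this]; exact haY
      · rw [Set.mem_singleton_iff.mp ha] at haY
        have : mw w v = false := (hYX haY).2.1
        rw [← hmw, this]; exact haY
    · refine single_hit hsat (hP (pd17 E w v s)) hemp ?_
      rintro a (rfl | ha)
      · exact hact w hw
      · rw [Set.mem_singleton_iff.mp ha]; exact hobsV v s hμ
  have hle' : ∀ w u v s, labelE' w u v s ∈ X → labelE' w u v s ∈ Y := by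
    intro w u v s h
    obtain ⟨hw, hE, hsg, hdisj⟩ := h
    rcases hdisj with hM | hσ'
    · have hpos : ({active w, edgeMIC u v} : Set (AtomD V)) ⊆ Y := by
        rintro a (rfl | ha)
        · exact hact w hw
        · rw [Set.mem_singleton_iff.mp ha]; exact hem u v hE hM
      obtain ⟨a, ha, haY⟩ := head_hit hsat (hP (pd16 E w hE)) hemp hpos
      rcases ha with rfl | ha
      · have : sgw w (u, v) = true := (hYX haY).2.2.1
        rw [← hsg, this]; exact haY
      · rw [Set.mem_singleton_iff.mp ha] at haY
        have : sgw w (u, v) = false := (hYX haY).2.2.1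
        rw [← hsg, this]; exact haY
    · refine single_hit hsat (hP (pd18 E w s hE)) hemp ?_
      rintro a (rfl | ha)
      · exact hact w hw
      · rw [Set.mem_singleton_iff.mp ha]; exact hobsE u v s hσ'
  have hrc' : ∀ w v s, receive' w v s ∈ X → receive' w v s ∈ Y := by
    intro w v s h
    obtain ⟨hw, hvw, u, hE, hd1, hd2, hsgn⟩ := h
    have hb1 : labelE' w u v (sgw w (u, v)) ∈ Y := hle' w u v _ ⟨hw, hE, rfl, hd1⟩
    have hb2 : labelV' w u (mw w u) ∈ Y := hlv' w u _ ⟨hw, rfl, hd2⟩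
    by_cases hc : mw w u = sgw w (u, v)
    · rw [hc, signMul_self] at hsgn
      subst hsgn
      refine single_hit hsat (hP (pd19 E (sgw w (u, v)) hE hvw)) hemp ?_
      rintro a (rfl | ha)
      · exact hb1
      · rw [Set.mem_singleton_iff.mp ha]; rw [← hc]; exact hb2
    · rw [signMul_ne hc] at hsgn
      subst hsgn
      refine single_hit hsat
        (hP (pd20 E hE hvw (fun h => hc h.symm))) hemp ?_
      rintro a (rfl | ha)
      · exact hb1
      · rw [Set.mem_singleton_iff.mp ha]; exact hb2
  -- conclude Y = X
  refine Set.Subset.antisymm hYX ?_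
  intro a ha
  cases a with
  | vertex i => exact hvert i
  | edge u v => exact hedge u v ha
  | observedE u v s => exact hobsE u v s ha
  | observedV v s => exact hobsV v s ha
  | input i => exact hinput i ha
  | labelV v s => exact hlV v s
  | labelE u v s => exact hlE u v s ha
  | active v => exact hact v ha
  | inactive v => exact hinact v ha.1 ha.2
  | edgeMIC u v => exact hem u v ha.1 ha.2
  | vertexMIC v => exact hvm v ha
  | opposite u v => exact hoppY u v ha
  | bottom => exact hbot
  | labelV' w v s => exact hlv' w v s ha
  | labelE' w u v s => exact hle' w u v s ha
  | receive' w v s => exact hrc' w v s ha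

end PartA2

section PartB
open AtomD
variable {V : Type} {E : Set (V × V)} {σ : V × V → Option Bool} {μ : V → Option Bool}
  {I : Set V} {X : Set (AtomD V)}

lemma B_bot (hsat : ∀ r ∈ reduct (PD E ∪ tauD E σ μ I) X, RuleSat X r) : bottom ∈ X := by
  by_contra h
  exact no_fire hsat (Or.inl (pd12 E)) (Set.singleton_inter_eq_empty.mpr h)
    (Set.empty_subset X)

lemma B_vert (hsat : ∀ r ∈ reduct (PD E ∪ tauD E σ μ I) X, RuleSat X r) (i : V) :
    vertex i ∈ X :=
  single_hit hsat (Or.inr (tf1 E σ μ I i)) (Set.empty_inter X) (Set.empty_subset X)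

lemma B_edge (hsat : ∀ r ∈ reduct (PD E ∪ tauD E σ μ I) X, RuleSat X r) {u v : V}
    (h : (u, v) ∈ E) : edge u v ∈ X :=
  single_hit hsat (Or.inr (tf2 E σ μ I h)) (Set.empty_inter X) (Set.empty_subset X)

lemma B_obsE (hσ : ∀ e, σ e ≠ none → e ∈ E)
    (hsat : ∀ r ∈ reduct (PD E ∪ tauD E σ μ I) X, RuleSat X r) {u v : V} {s : Bool}
    (h : σ (u, v) = some s) : observedE u v s ∈ X :=
  single_hit hsat (Or.inr (tf3 E σ μ I (hσ (u, v) (h ▸ Option.some_ne_none s)) h))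
    (Set.empty_inter X) (Set.empty_subset X)

lemma B_obsV (hsat : ∀ r ∈ reduct (PD E ∪ tauD E σ μ I) X, RuleSat X r) {v : V} {s : Bool}
    (h : μ v = some s) : observedV v s ∈ X :=
  single_hit hsat (Or.inr (tf4 E σ μ I h)) (Set.empty_inter X) (Set.empty_subset X)

lemma B_input (hsat : ∀ r ∈ reduct (PD E ∪ tauD E σ μ I) X, RuleSat X r) {i : V}
    (h : i ∈ I) : input i ∈ X :=
  single_hit hsat (Or.inr (tf5 E σ μ I h)) (Set.empty_inter X) (Set.empty_subset X)

lemma B_lV (hsat : ∀ r ∈ reduct (PD E ∪ tauD E σ μ I) X, RuleSat X r) (v : V) (s : Bool) :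
    labelV v s ∈ X := by
  refine single_hit hsat (Or.inl (pd13 E v s)) (Set.empty_inter X) ?_
  rintro a (rfl | ha)
  · exact B_bot hsat
  · rw [Set.mem_singleton_iff.mp ha]; exact B_vert hsat v

lemma B_lE (hsat : ∀ r ∈ reduct (PD E ∪ tauD E σ μ I) X, RuleSat X r) {u v : V}
    (hE : (u, v) ∈ E) (s : Bool) : labelE u v s ∈ X := by
  refine single_hit hsat (Or.inl (pd14 E s hE)) (Set.empty_inter X) ?_
  rintro a (rfl | ha)
  · exact B_bot hsat
  · rw [Set.mem_singleton_iff.mp ha]; exact B_edge hsat hE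

/-- junk-freeness of answer sets -/
lemma B_junkfree (hX : IsAnswerSet (PD E ∪ tauD E σ μ I) X) :
    X ⊆ UB E σ μ I X := by
  have hsat := hX.1
  have key : ∀ r ∈ reduct (PD E ∪ tauD E σ μ I) X, RuleSat (X ∩ UB E σ μ I X) r := by
    rintro r ⟨r₀, hr₀, hneg, rfl⟩
    intro hpos _
    have hposX : r₀.pos ⊆ X := fun {a} ha => (hpos ha).1
    have hh : (r₀.head ∩ X).Nonempty :=
      hX.1 ⟨r₀.head, r₀.pos, ∅⟩ ⟨r₀, hr₀, hneg, rfl⟩ hposX (Set.empty_inter X)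
    rcases hr₀ with hpd | htf
    · rcases hpd with ⟨v,s,rfl⟩ | ⟨u,v,s,hE,rfl⟩ | ⟨v,rfl⟩ | ⟨u,v,hE,rfl⟩ | ⟨u,v,hE,rfl⟩ |
        ⟨v,rfl⟩ | ⟨v,rfl⟩ | ⟨u,v,hE,rfl⟩ | ⟨u,v,s,hE,rfl⟩ | ⟨u,v,s,t,hE,hst,rfl⟩ |
        ⟨v,rfl⟩ | rfl | ⟨v,s,rfl⟩ | ⟨u,v,s,hE,rfl⟩ | ⟨w,v,rfl⟩ | ⟨w,u,v,hE,rfl⟩ |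
        ⟨w,v,s,rfl⟩ | ⟨w,u,v,s,hE,rfl⟩ | ⟨w,u,v,s,hE,hvw,rfl⟩ |
        ⟨w,u,v,s,t,hE,hvw,hst,rfl⟩ | ⟨w,v,s,hvw,rfl⟩
      -- 1 labelV
      · obtain ⟨a, ha, haX⟩ := hh
        refine ⟨a, ha, haX, ?_⟩
        rw [Set.mem_singleton_iff.mp ha]; trivial
      -- 2 labelE
      · obtain ⟨a, ha, haX⟩ := hh
        refine ⟨a, ha, haX, ?_⟩
        rw [Set.mem_singleton_iff.mp ha]; trivial
      -- 3 active/inactive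
      · obtain ⟨a, ha, haX⟩ := hh
        refine ⟨a, ha, haX, ?_⟩
        have hvI : v ∉ I := by
          intro hI
          exact Set.eq_empty_iff_forall_notMem.mp hneg (input v) ⟨rfl, B_input hsat hI⟩
        rcases ha with rfl | ha
        · exact hvI
        · rw [Set.mem_singleton_iff.mp ha]; trivial
      -- 4 edgeMIC
      · obtain ⟨a, ha, haX⟩ := hh
        refine ⟨a, ha, haX, ?_⟩
        rw [Set.mem_singleton_iff.mp ha]; trivial
      -- 5 vertexMIC
      · obtain ⟨a, ha, haX⟩ := hh
        refine ⟨a, ha, haX, ?_⟩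
        rw [Set.mem_singleton_iff.mp ha]; trivial
      -- 6 vertexMIC
      · obtain ⟨a, ha, haX⟩ := hh
        refine ⟨a, ha, haX, ?_⟩
        rw [Set.mem_singleton_iff.mp ha]; trivial
      -- 7 labelV choice
      · obtain ⟨a, ha, haX⟩ := hh
        refine ⟨a, ha, haX, ?_⟩
        rcases ha with rfl | ha
        · trivial
        · rw [Set.mem_singleton_iff.mp ha]; trivial
      -- 8 labelE choice
      · obtain ⟨a, ha, haX⟩ := hh
        refine ⟨a, ha, haX, ?_⟩
        rcases ha with rfl | ha
        · trivial
        · rw [Set.mem_singleton_iff.mp ha]; trivial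
      -- 9 opposite
      · obtain ⟨a, ha, haX⟩ := hh
        refine ⟨a, ha, haX, ?_⟩
        rw [Set.mem_singleton_iff.mp ha]; trivial
      -- 10 opposite
      · obtain ⟨a, ha, haX⟩ := hh
        refine ⟨a, ha, haX, ?_⟩
        rw [Set.mem_singleton_iff.mp ha]; trivial
      -- 11 bottom
      · obtain ⟨a, ha, haX⟩ := hh
        refine ⟨a, ha, haX, ?_⟩
        rw [Set.mem_singleton_iff.mp ha]; trivial
      -- 12 constraint
      · obtain ⟨a, ha, -⟩ := hh
        exact ha.elim
      -- 13 labelV sat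
      · obtain ⟨a, ha, haX⟩ := hh
        refine ⟨a, ha, haX, ?_⟩
        rw [Set.mem_singleton_iff.mp ha]; trivial
      -- 14 labelE sat
      · obtain ⟨a, ha, haX⟩ := hh
        refine ⟨a, ha, haX, ?_⟩
        rw [Set.mem_singleton_iff.mp ha]; trivial
      -- 15 labelV' choice
      · obtain ⟨a, ha, haX⟩ := hh
        refine ⟨a, ha, haX, ?_⟩
        rcases ha with rfl | ha
        · trivial
        · rw [Set.mem_singleton_iff.mp ha]; trivial
      -- 16 labelE' choice
      · obtain ⟨a, ha, haX⟩ := hh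
        refine ⟨a, ha, haX, ?_⟩
        rcases ha with rfl | ha
        · trivial
        · rw [Set.mem_singleton_iff.mp ha]; trivial
      -- 17 labelV' observed
      · obtain ⟨a, ha, haX⟩ := hh
        refine ⟨a, ha, haX, ?_⟩
        rw [Set.mem_singleton_iff.mp ha]; trivial
      -- 18 labelE' observed
      · obtain ⟨a, ha, haX⟩ := hh
        refine ⟨a, ha, haX, ?_⟩
        rw [Set.mem_singleton_iff.mp ha]; trivial
      -- 19 receive' true
      · obtain ⟨a, ha, haX⟩ := hh
        refine ⟨a, ha, haX, ?_⟩
        rw [Set.mem_singleton_iff.mp ha]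
        exact ⟨hvw, u, s, s, hposX (Set.mem_insert _ _),
          hposX (Set.mem_insert_of_mem _ rfl), hE, (signMul_self s).symm⟩
      -- 20 receive' false
      · obtain ⟨a, ha, haX⟩ := hh
        refine ⟨a, ha, haX, ?_⟩
        rw [Set.mem_singleton_iff.mp ha]
        exact ⟨hvw, u, t, s, hposX (Set.mem_insert _ _),
          hposX (Set.mem_insert_of_mem _ rfl), hE,
          (signMul_ne (fun h => hst h.symm)).symm⟩
      -- 21 constraint
      · obtain ⟨a, ha, -⟩ := hh
        exact ha.elim
    · rcases htf with ⟨i,rfl⟩ | ⟨j,i,hE,rfl⟩ | ⟨j,i,s,hE,hs,rfl⟩ | ⟨i,s,hs,rfl⟩ | ⟨i,hI,rfl⟩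
      · obtain ⟨a, ha, haX⟩ := hh
        refine ⟨a, ha, haX, ?_⟩
        rw [Set.mem_singleton_iff.mp ha]; trivial
      · obtain ⟨a, ha, haX⟩ := hh
        refine ⟨a, ha, haX, ?_⟩
        rw [Set.mem_singleton_iff.mp ha]; trivial
      · obtain ⟨a, ha, haX⟩ := hh
        refine ⟨a, ha, haX, ?_⟩
        rw [Set.mem_singleton_iff.mp ha]; exact hs
      · obtain ⟨a, ha, haX⟩ := hh
        refine ⟨a, ha, haX, ?_⟩
        rw [Set.mem_singleton_iff.mp ha]; exact hs
      · obtain ⟨a, ha, haX⟩ := hh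
        refine ⟨a, ha, haX, ?_⟩
        rw [Set.mem_singleton_iff.mp ha]; trivial
  have := hX.2 (X ∩ UB E σ μ I X) Set.inter_subset_left key
  intro a ha
  exact (this.symm ▸ ha : a ∈ X ∩ UB E σ μ I X).2

end PartB

section PartB2
open AtomD
variable {V : Type} {E : Set (V × V)} {σ : V × V → Option Bool} {μ : V → Option Bool}
  {I : Set V} {X : Set (AtomD V)}

lemma B_uniqueV (hX : IsAnswerSet (PD E ∪ tauD E σ μ I) X) {w v : V} {s s' : Bool}
    (h1 : labelV' w v s ∈ X) (h2 : labelV' w v s' ∈ X) : s = s' := by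
  by_contra hne
  have hss' : s' = !s := by cases s <;> cases s' <;> simp_all
  classical
  set s₀ : Bool := if μ v = some s then s' else s with hs₀def
  have hs₀X : labelV' w v s₀ ∈ X := by
    rw [hs₀def]; split_ifs
    exacts [h2, h1]
  have hoth : labelV' w v (!s₀) ∈ X := by
    rw [hs₀def]; split_ifs with h
    · show labelV' w v (!s') ∈ X
      rw [hss', Bool.not_not]; exact h1
    · show labelV' w v (!s) ∈ X
      rw [← hss']; exact h2
  have hμ₀ : μ v ≠ some s₀ := by
    rw [hs₀def]; split_ifs with h
    · rw [h]; intro hc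
      exact hne (Option.some_injective _ hc)
    · exact h
  apply removal hX hs₀X
  intro r hr hneg hahead hapos hposX
  rcases hr with hpd | htf
  · rcases hpd with ⟨v₂,s₂,rfl⟩ | ⟨u₂,v₂,s₂,hE₂,rfl⟩ | ⟨v₂,rfl⟩ | ⟨u₂,v₂,hE₂,rfl⟩ |
      ⟨u₂,v₂,hE₂,rfl⟩ | ⟨v₂,rfl⟩ | ⟨v₂,rfl⟩ | ⟨u₂,v₂,hE₂,rfl⟩ | ⟨u₂,v₂,s₂,hE₂,rfl⟩ |
      ⟨u₂,v₂,s₂,t₂,hE₂,hst₂,rfl⟩ | ⟨v₂,rfl⟩ | rfl | ⟨v₂,s₂,rfl⟩ | ⟨u₂,v₂,s₂,hE₂,rfl⟩ |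
      ⟨w₂,v₂,rfl⟩ | ⟨w₂,u₂,v₂,hE₂,rfl⟩ | ⟨w₂,v₂,s₂,rfl⟩ | ⟨w₂,u₂,v₂,s₂,hE₂,rfl⟩ |
      ⟨w₂,u₂,v₂,s₂,hE₂,hvw₂,rfl⟩ | ⟨w₂,u₂,v₂,s₂,t₂,hE₂,hvw₂,hst₂,rfl⟩ |
      ⟨w₂,v₂,s₂,hvw₂,rfl⟩
    · exact absurd hahead (by simp)
    · exact absurd hahead (by simp)
    · exact absurd hahead (by simp)
    · exact absurd hahead (by simp)
    · exact absurd hahead (by simp)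
    · exact absurd hahead (by simp)
    · exact absurd hahead (by simp)
    · exact absurd hahead (by simp)
    · exact absurd hahead (by simp)
    · exact absurd hahead (by simp)
    · exact absurd hahead (by simp)
    · exact absurd hahead (by simp)
    · exact absurd hahead (by simp)
    · exact absurd hahead (by simp)
    -- 15 : choice rule, the other sign is present
    · simp only [Set.mem_insert_iff, Set.mem_singleton_iff] at hahead
      have hw2 : w₂ = w ∧ v₂ = v := by
        rcases hahead with h | h <;> · injection h with hw hv hs; exact ⟨hw.symm, hv.symm⟩
      obtain ⟨rfl, rfl⟩ := hw2
      refine ⟨labelV' w₂ v₂ (!s₀), ⟨?_, hoth⟩, by simp⟩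
      cases s₀
      · exact Set.mem_insert _ _
      · exact Set.mem_insert_of_mem _ rfl
    · exact absurd hahead (by simp)
    -- 17 : observed rule: contradicts μ v ≠ some s₀
    · exfalso
      have heq := Set.mem_singleton_iff.mp hahead
      injection heq with hw hv hs
      subst hw; subst hv; subst hs
      have : observedV v s₀ ∈ X := hposX (Set.mem_insert_of_mem _ rfl)
      exact hμ₀ (B_junkfree hX this)
    · exact absurd hahead (by simp)
    · exact absurd hahead (by simp)
    · exact absurd hahead (by simp)
    · exact absurd hahead (by simp)
  · rcases htf with ⟨i,rfl⟩ | ⟨j,i,hE₂,rfl⟩ | ⟨j,i,s₂,hE₂,hs₂,rfl⟩ | ⟨i,s₂,hs₂,rfl⟩ |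
      ⟨i,hI₂,rfl⟩
    · exact absurd hahead (by simp [fact])
    · exact absurd hahead (by simp [fact])
    · exact absurd hahead (by simp [fact])
    · exact absurd hahead (by simp [fact])
    · exact absurd hahead (by simp [fact])

lemma B_uniqueE (hX : IsAnswerSet (PD E ∪ tauD E σ μ I) X) {w u v : V} {s s' : Bool}
    (h1 : labelE' w u v s ∈ X) (h2 : labelE' w u v s' ∈ X) : s = s' := by
  by_contra hne
  have hss' : s' = !s := by cases s <;> cases s' <;> simp_all
  classical
  set s₀ : Bool := if σ (u, v) = some s then s' else s with hs₀def
  have hs₀X : labelE' w u v s₀ ∈ X := by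
    rw [hs₀def]; split_ifs
    exacts [h2, h1]
  have hoth : labelE' w u v (!s₀) ∈ X := by
    rw [hs₀def]; split_ifs with h
    · show labelE' w u v (!s') ∈ X
      rw [hss', Bool.not_not]; exact h1
    · show labelE' w u v (!s) ∈ X
      rw [← hss']; exact h2
  have hσ₀ : σ (u, v) ≠ some s₀ := by
    rw [hs₀def]; split_ifs with h
    · rw [h]; intro hc
      exact hne (Option.some_injective _ hc)
    · exact h
  apply removal hX hs₀X
  intro r hr hneg hahead hapos hposX
  rcases hr with hpd | htf
  · rcases hpd with ⟨v₂,s₂,rfl⟩ | ⟨u₂,v₂,s₂,hE₂,rfl⟩ | ⟨v₂,rfl⟩ | ⟨u₂,v₂,hE₂,rfl⟩ |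
      ⟨u₂,v₂,hE₂,rfl⟩ | ⟨v₂,rfl⟩ | ⟨v₂,rfl⟩ | ⟨u₂,v₂,hE₂,rfl⟩ | ⟨u₂,v₂,s₂,hE₂,rfl⟩ |
      ⟨u₂,v₂,s₂,t₂,hE₂,hst₂,rfl⟩ | ⟨v₂,rfl⟩ | rfl | ⟨v₂,s₂,rfl⟩ | ⟨u₂,v₂,s₂,hE₂,rfl⟩ |
      ⟨w₂,v₂,rfl⟩ | ⟨w₂,u₂,v₂,hE₂,rfl⟩ | ⟨w₂,v₂,s₂,rfl⟩ | ⟨w₂,u₂,v₂,s₂,hE₂,rfl⟩ |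
      ⟨w₂,u₂,v₂,s₂,hE₂,hvw₂,rfl⟩ | ⟨w₂,u₂,v₂,s₂,t₂,hE₂,hvw₂,hst₂,rfl⟩ |
      ⟨w₂,v₂,s₂,hvw₂,rfl⟩
    · exact absurd hahead (by simp)
    · exact absurd hahead (by simp)
    · exact absurd hahead (by simp)
    · exact absurd hahead (by simp)
    · exact absurd hahead (by simp)
    · exact absurd hahead (by simp)
    · exact absurd hahead (by simp)
    · exact absurd hahead (by simp)
    · exact absurd hahead (by simp)
    · exact absurd hahead (by simp)
    · exact absurd hahead (by simp)
    · exact absurd hahead (by simp)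
    · exact absurd hahead (by simp)
    · exact absurd hahead (by simp)
    · exact absurd hahead (by simp)
    -- 16 : choice rule
    · simp only [Set.mem_insert_iff, Set.mem_singleton_iff] at hahead
      have hw2 : w₂ = w ∧ u₂ = u ∧ v₂ = v := by
        rcases hahead with h | h <;>
          · injection h with hw hu hv hs; exact ⟨hw.symm, hu.symm, hv.symm⟩
      obtain ⟨rfl, rfl, rfl⟩ := hw2
      refine ⟨labelE' w₂ u₂ v₂ (!s₀), ⟨?_, hoth⟩, by simp⟩
      cases s₀
      · exact Set.mem_insert _ _
      · exact Set.mem_insert_of_mem _ rfl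
    · exact absurd hahead (by simp)
    -- 18 : observed rule
    · exfalso
      have heq := Set.mem_singleton_iff.mp hahead
      injection heq with hw hu hv hs
      subst hw; subst hu; subst hv; subst hs
      have : observedE u v s₀ ∈ X := hposX (Set.mem_insert_of_mem _ rfl)
      exact hσ₀ (B_junkfree hX this)
    · exact absurd hahead (by simp)
    · exact absurd hahead (by simp)
    · exact absurd hahead (by simp)
  · rcases htf with ⟨i,rfl⟩ | ⟨j,i,hE₂,rfl⟩ | ⟨j,i,s₂,hE₂,hs₂,rfl⟩ | ⟨i,s₂,hs₂,rfl⟩ |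
      ⟨i,hI₂,rfl⟩
    · exact absurd hahead (by simp [fact])
    · exact absurd hahead (by simp [fact])
    · exact absurd hahead (by simp [fact])
    · exact absurd hahead (by simp [fact])
    · exact absurd hahead (by simp [fact])

end PartB2

section PartB3
open AtomD
variable {V : Type} {E : Set (V × V)} {σ : V × V → Option Bool} {μ : V → Option Bool}
  {I : Set V} {X : Set (AtomD V)}

/-- the smaller model obtained from a witnessing labeling of `W` -/
def YB (X : Set (AtomD V)) (σ' : V × V → Bool) (μ' : V → Bool) : Set (AtomD V) := fun a =>
  a ∈ X ∧ (match a with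
    | bottom => False
    | labelV v s => μ' v = s
    | labelE u v s => σ' (u, v) = s
    | opposite u v => μ' v ≠ signMul (μ' u) (σ' (u, v))
    | _ => True)

lemma B_noWit (hσ : ∀ e, σ e ≠ none → e ∈ E)
    (hX : IsAnswerSet (PD E ∪ tauD E σ μ I) X) {W : Set V}
    (hW : {i | active i ∈ X} = W) :
    ¬ ∃ σ' μ', Witnessing E σ μ I W σ' μ' := by
  rintro ⟨σ', μ', hextσ, hextμ, hwit3⟩
  have hsat := hX.1
  have hbot : bottom ∈ X := B_bot hsat
  have hactive : ∀ v, active v ∈ X → v ∈ W := fun v h => by rw [← hW]; exact h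
  have hactI : ∀ v, active v ∈ X → v ∉ I := fun v h => B_junkfree hX h
  have hobsVX : ∀ v s, observedV v s ∈ X → μ v = some s := fun v s h => B_junkfree hX h
  have hobsEX : ∀ u v s, observedE u v s ∈ X → σ (u, v) = some s := fun u v s h =>
    B_junkfree hX h
  have key : ∀ r ∈ reduct (PD E ∪ tauD E σ μ I) X, RuleSat (YB X σ' μ') r := by
    rintro r ⟨r₀, hr₀, hneg, rfl⟩
    have hXsat : RuleSat X ⟨r₀.head, r₀.pos, ∅⟩ := hX.1 _ ⟨r₀, hr₀, hneg, rfl⟩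
    rcases hr₀ with hpd | htf
    · rcases hpd with ⟨v,s,rfl⟩ | ⟨u,v,s,hE,rfl⟩ | ⟨v,rfl⟩ | ⟨u,v,hE,rfl⟩ | ⟨u,v,hE,rfl⟩ |
        ⟨v,rfl⟩ | ⟨v,rfl⟩ | ⟨u,v,hE,rfl⟩ | ⟨u,v,s,hE,rfl⟩ | ⟨u,v,s,t,hE,hst,rfl⟩ |
        ⟨v,rfl⟩ | rfl | ⟨v,s,rfl⟩ | ⟨u,v,s,hE,rfl⟩ | ⟨w,v,rfl⟩ | ⟨w,u,v,hE,rfl⟩ |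
        ⟨w,v,s,rfl⟩ | ⟨w,u,v,s,hE,rfl⟩ | ⟨w,u,v,s,hE,hvw,rfl⟩ |
        ⟨w,u,v,s,t,hE,hvw,hst,rfl⟩ | ⟨w,v,s,hvw,rfl⟩
      -- 1
      · intro hpos _
        have h := hpos rfl
        exact ⟨labelV v s, rfl, B_lV hsat v s, hextμ v s (hobsVX v s h.1)⟩
      -- 2
      · intro hpos _
        have h := hpos rfl
        exact ⟨labelE u v s, rfl, B_lE hsat hE s, hextσ (u, v) s (hobsEX u v s h.1)⟩
      -- 3
      · intro hpos _
        obtain ⟨a, ha, haX⟩ := hXsat (fun {a} h => (hpos h).1) (Set.empty_inter X)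
        refine ⟨a, ha, haX, ?_⟩
        rcases ha with rfl | ha
        · trivial
        · rw [Set.mem_singleton_iff.mp ha]; trivial
      -- 4
      · intro hpos _
        obtain ⟨a, ha, haX⟩ := hXsat (fun {a} h => (hpos h).1) (Set.empty_inter X)
        refine ⟨a, ha, haX, ?_⟩
        rw [Set.mem_singleton_iff.mp ha]; trivial
      -- 5
      · intro hpos _
        obtain ⟨a, ha, haX⟩ := hXsat (fun {a} h => (hpos h).1) (Set.empty_inter X)
        refine ⟨a, ha, haX, ?_⟩
        rw [Set.mem_singleton_iff.mp ha]; trivial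
      -- 6
      · intro hpos _
        obtain ⟨a, ha, haX⟩ := hXsat (fun {a} h => (hpos h).1) (Set.empty_inter X)
        refine ⟨a, ha, haX, ?_⟩
        rw [Set.mem_singleton_iff.mp ha]; trivial
      -- 7
      · intro hpos _
        refine ⟨labelV v (μ' v), ?_, B_lV hsat v (μ' v), rfl⟩
        cases μ' v
        · exact Set.mem_insert_of_mem _ rfl
        · exact Set.mem_insert _ _
      -- 8
      · intro hpos _
        refine ⟨labelE u v (σ' (u, v)), ?_, B_lE hsat hE _, rfl⟩
        cases σ' (u, v)
        · exact Set.mem_insert_of_mem _ rfl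
        · exact Set.mem_insert _ _
      -- 9
      · intro hpos _
        have h1 := hpos (Set.mem_insert _ _)
        have h2 := hpos (Set.mem_insert_of_mem _ (Set.mem_insert _ _))
        have h3 := hpos (Set.mem_insert_of_mem _ (Set.mem_insert_of_mem _ rfl))
        obtain ⟨a, ha, haX⟩ := hXsat (fun {a} h => (hpos h).1) (Set.empty_inter X)
        rw [Set.mem_singleton_iff.mp ha] at haX
        refine ⟨opposite u v, rfl, haX, ?_⟩
        show μ' v ≠ signMul (μ' u) (σ' (u, v))
        rw [h3.2, h2.2, h1.2]
        cases s <;> simp [signMul]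
      -- 10
      · intro hpos _
        have h1 := hpos (Set.mem_insert _ _)
        have h2 := hpos (Set.mem_insert_of_mem _ (Set.mem_insert _ _))
        have h3 := hpos (Set.mem_insert_of_mem _ (Set.mem_insert_of_mem _ rfl))
        obtain ⟨a, ha, haX⟩ := hXsat (fun {a} h => (hpos h).1) (Set.empty_inter X)
        rw [Set.mem_singleton_iff.mp ha] at haX
        refine ⟨opposite u v, rfl, haX, ?_⟩
        show μ' v ≠ signMul (μ' u) (σ' (u, v))
        rw [h3.2, h2.2, h1.2]
        cases s <;> cases t <;> simp_all [signMul]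
      -- 11
      · intro hpos _
        exfalso
        have hactY := hpos (Set.mem_insert _ _)
        have hvW := hactive v hactY.1
        have hvI := hactI v hactY.1
        obtain ⟨j, hjE, heq⟩ := hwit3 v hvW hvI
        have hoppY := hpos (Set.mem_insert_of_mem _ ⟨j, hjE, rfl⟩)
        exact hoppY.2 heq
      -- 12
      · intro _ _
        exact absurd (⟨rfl, hbot⟩ : bottom ∈ ({bottom} : Set (AtomD V)) ∩ X)
          (Set.eq_empty_iff_forall_notMem.mp hneg bottom).elim
      -- 13
      · intro hpos _
        exact ((hpos (Set.mem_insert _ _)).2).elim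
      -- 14
      · intro hpos _
        exact ((hpos (Set.mem_insert _ _)).2).elim
      -- 15
      · intro hpos _
        obtain ⟨a, ha, haX⟩ := hXsat (fun {a} h => (hpos h).1) (Set.empty_inter X)
        refine ⟨a, ha, haX, ?_⟩
        rcases ha with rfl | ha
        · trivial
        · rw [Set.mem_singleton_iff.mp ha]; trivial
      -- 16
      · intro hpos _
        obtain ⟨a, ha, haX⟩ := hXsat (fun {a} h => (hpos h).1) (Set.empty_inter X)
        refine ⟨a, ha, haX, ?_⟩
        rcases ha with rfl | ha
        · trivial
        · rw [Set.mem_singleton_iff.mp ha]; trivial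
      -- 17
      · intro hpos _
        obtain ⟨a, ha, haX⟩ := hXsat (fun {a} h => (hpos h).1) (Set.empty_inter X)
        refine ⟨a, ha, haX, ?_⟩
        rw [Set.mem_singleton_iff.mp ha]; trivial
      -- 18
      · intro hpos _
        obtain ⟨a, ha, haX⟩ := hXsat (fun {a} h => (hpos h).1) (Set.empty_inter X)
        refine ⟨a, ha, haX, ?_⟩
        rw [Set.mem_singleton_iff.mp ha]; trivial
      -- 19
      · intro hpos _
        obtain ⟨a, ha, haX⟩ := hXsat (fun {a} h => (hpos h).1) (Set.empty_inter X)
        refine ⟨a, ha, haX, ?_⟩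
        rw [Set.mem_singleton_iff.mp ha]; trivial
      -- 20
      · intro hpos _
        obtain ⟨a, ha, haX⟩ := hXsat (fun {a} h => (hpos h).1) (Set.empty_inter X)
        refine ⟨a, ha, haX, ?_⟩
        rw [Set.mem_singleton_iff.mp ha]; trivial
      -- 21
      · intro hpos _
        obtain ⟨a, ha, -⟩ := hXsat (fun {a} h => (hpos h).1) (Set.empty_inter X)
        exact ha.elim
    · rcases htf with ⟨i,rfl⟩ | ⟨j,i,hE,rfl⟩ | ⟨j,i,s,hE,hs,rfl⟩ | ⟨i,s,hs,rfl⟩ | ⟨i,hI,rfl⟩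
        <;> · intro hpos _
              obtain ⟨a, ha, haX⟩ := hXsat (fun {a} h => (hpos h).1) (Set.empty_inter X)
              refine ⟨a, ha, haX, ?_⟩
              rw [Set.mem_singleton_iff.mp ha]; trivial
  have heq := hX.2 (YB X σ' μ') (fun a h => h.1) key
  exact (heq.symm ▸ hbot : bottom ∈ YB X σ' μ').2

end PartB3

section PartB4
open AtomD
variable {V : Type} {E : Set (V × V)} {σ : V × V → Option Bool} {μ : V → Option Bool}
  {I : Set V} {X : Set (AtomD V)}

lemma B_minimal (hσ : ∀ e, σ e ≠ none → e ∈ E)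
    (hX : IsAnswerSet (PD E ∪ tauD E σ μ I) X) {W : Set V}
    (hW : {i | active i ∈ X} = W) :
    ∀ W', W' ⊂ W → ∃ σ' μ', Witnessing E σ μ I W' σ' μ' := by
  intro W' hss
  obtain ⟨w, hwW, hwW'⟩ := Set.exists_of_ssubset hss
  have hsat := hX.1
  have hemp : (∅ : Set (AtomD V)) ∩ X = ∅ := Set.empty_inter X
  have hactw : active w ∈ X := by
    have := hwW; rw [← hW] at this; exact this
  classical
  have hval : ∀ v s, labelV' w v s ∈ X →
      (if labelV' w v true ∈ X then true
       else if labelV' w v false ∈ X then false else (μ v).getD true) = s := by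
    intro v s h
    cases s
    · have hnt : labelV' w v true ∉ X := fun ht => by
        have := B_uniqueV hX ht h; simp at this
      rw [if_neg hnt, if_pos h]
    · rw [if_pos h]
  have hvalE : ∀ u v s, labelE' w u v s ∈ X →
      (if labelE' w u v true ∈ X then true
       else if labelE' w u v false ∈ X then false else (σ (u, v)).getD true) = s := by
    intro u v s h
    cases s
    · have hnt : labelE' w u v true ∉ X := fun ht => by
        have := B_uniqueE hX ht h; simp at this
      rw [if_neg hnt, if_pos h]
    · rw [if_pos h]
  refine ⟨fun p => if labelE' w p.1 p.2 true ∈ X then true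
      else if labelE' w p.1 p.2 false ∈ X then false else (σ p).getD true,
    fun v => if labelV' w v true ∈ X then true
      else if labelV' w v false ∈ X then false else (μ v).getD true, ?_, ?_, ?_⟩
  · rintro ⟨u, v⟩ s h
    refine hvalE u v s ?_
    refine single_hit hsat (Or.inl (pd18 E w s (hσ (u, v) (h ▸ Option.some_ne_none s))))
      hemp ?_
    rintro a (rfl | ha)
    · exact hactw
    · rw [Set.mem_singleton_iff.mp ha]; exact B_obsE hσ hsat h
  · intro v s h
    refine hval v s ?_
    refine single_hit hsat (Or.inl (pd17 E w v s)) hemp ?_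
    rintro a (rfl | ha)
    · exact hactw
    · rw [Set.mem_singleton_iff.mp ha]; exact B_obsV hsat h
  · intro v hvW' hvI
    have hvW : v ∈ W := hss.1 hvW'
    have hvw : v ≠ w := fun h => hwW' (h ▸ hvW')
    have hactv : active v ∈ X := by
      have := hvW; rw [← hW] at this; exact this
    have hvm : vertexMIC v ∈ X :=
      single_hit hsat (Or.inl (pd6 E v)) hemp (Set.singleton_subset_iff.mpr hactv)
    have hlv : ∃ s, labelV' w v s ∈ X := by
      have hpos : ({active w, vertexMIC v} : Set (AtomD V)) ⊆ X := by
        rintro a (rfl | ha)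
        · exact hactw
        · rw [Set.mem_singleton_iff.mp ha]; exact hvm
      obtain ⟨a, ha, haX⟩ := head_hit hsat (Or.inl (pd15 E w v)) hemp hpos
      rcases ha with rfl | ha
      · exact ⟨true, haX⟩
      · rw [Set.mem_singleton_iff.mp ha] at haX; exact ⟨false, haX⟩
    obtain ⟨s, hs⟩ := hlv
    have hrc : receive' w v s ∈ X := by
      by_contra hnr
      refine no_fire hsat (Or.inl (pd21 E s hvw))
        (Set.singleton_inter_eq_empty.mpr hnr) ?_
      rintro a (rfl | ha)
      · exact hs
      · rw [Set.mem_singleton_iff.mp ha]; exact hactv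
    obtain ⟨hne, u, t, t', hle, hlv', hE, hsgn⟩ :=
      (B_junkfree hX hrc : UB E σ μ I X (receive' w v s))
    refine ⟨u, hE, ?_⟩
    show (if labelV' w v true ∈ X then true
        else if labelV' w v false ∈ X then false else (μ v).getD true) =
      signMul (if labelV' w u true ∈ X then true
        else if labelV' w u false ∈ X then false else (μ u).getD true)
        (if labelE' w u v true ∈ X then true
          else if labelE' w u v false ∈ X then false else (σ (u, v)).getD true)
    rw [hval v s hs, hval u t hlv', hvalE u v t' hle]
    exact hsgn

end PartB4

/-- Soundness and completeness of the MIC-extraction encoding: `W ⊆ V` is a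
Minimal Inconsistent Core iff there is an answer set `X` of `P_D ∪ τ((V,E,σ),μ)`
such that `{i | active(i) ∈ X} = W`. -/
theorem mic_iff_answer_set {V : Type} [Fintype V]
    (E : Set (V × V)) (σ : V × V → Option Bool) (μ : V → Option Bool) (I : Set V)
    (hσ : ∀ e, σ e ≠ none → e ∈ E) (W : Set V) :
    IsMIC E σ μ I W ↔
      ∃ X : Set (AtomD V), IsAnswerSet (PD E ∪ tauD E σ μ I) X ∧
        {i | AtomD.active i ∈ X} = W := by
  constructor
  · intro h
    have hWI : ∀ v ∈ W, v ∉ I := by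
      intro v hv hvI
      apply h.1
      obtain ⟨σ', μ', h1, h2, h3⟩ := h.2 (W \ {v}) (Set.sdiff_singleton_ssubset.mpr hv)
      exact ⟨σ', μ', h1, h2, fun i hi hiI =>
        h3 i ⟨hi, fun he => hiI ((Set.mem_singleton_iff.mp he) ▸ hvI)⟩ hiI⟩
    classical
    have hch : ∀ w : V, ∃ p : (V × V → Bool) × (V → Bool),
        w ∈ W → Witnessing E σ μ I (W \ {w}) p.1 p.2 := by
      intro w
      by_cases hw : w ∈ W
      · obtain ⟨s', m', hm⟩ := h.2 (W \ {w}) (Set.sdiff_singleton_ssubset.mpr hw)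
        exact ⟨(s', m'), fun _ => hm⟩
      · exact ⟨(fun e => (σ e).getD true, fun v => (μ v).getD true),
          fun hww => absurd hww hw⟩
    choose f hf using hch
    exact ⟨XA E σ μ I W (fun w => (f w).1) (fun w => (f w).2),
      ⟨XA_sat hWI hf, XA_min hσ hWI hf h.1⟩, rfl⟩
  · rintro ⟨X, hX, hW⟩
    exact ⟨B_noWit hσ hX hW, B_minimal hσ hX hW⟩
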